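/- arXiv:2012.08086 — 4 statements merged into one kernel-verified Lean document; each statement's English description precedes it below -/
import Mathlib

section
/- Let f : ℝ → ℝ be a bounded, twice continuously differentiable function with bounded second derivative. Then ‖f'‖_∞² ≤ 4 ‖f‖_∞ ‖f''‖_∞, where ‖·‖_∞ denotes the supremum norm on ℝ. -/
open Real

private lemma iteratedDerivWithin_Icc_eq (f : ℝ → ℝ) (n : ℕ) {a b x : ℝ}
    (hx : x ∈ Set.Ioo a b) :
    iteratedDerivWithin n f (Set.Icc a b) x = iteratedDeriv n f x := by
  rw [iteratedDerivWithin_eq_iteratedFDerivWithin, iteratedDeriv_eq_iteratedFDeriv]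
  congr 1
  rw [← Set.univ_inter (Set.Icc a b),
    iteratedFDerivWithin_inter (Icc_mem_nhds hx.1 hx.2), iteratedFDerivWithin_univ]

private lemma landau_step (f : ℝ → ℝ) (hf : ContDiff ℝ 2 f) {C0 C2 : ℝ}
    (h0 : ∀ y, |f y| ≤ C0) (h2 : ∀ y, |deriv (deriv f) y| ≤ C2)
    (x h : ℝ) (hh : 0 < h) :
    |deriv f x| * h ≤ 2 * C0 + C2 * (h ^ 2 / 2) := by
  have hd1 : Differentiable ℝ f := hf.differentiable (by norm_num)
  have hcd1 : ContDiff ℝ 1 (deriv f) := by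
    have h2' : (2 : WithTop ℕ∞) = 1 + 1 := by norm_num
    have hf' := hf
    rw [h2'] at hf'
    exact (contDiff_succ_iff_deriv.mp hf').2.2
  have hd2 : Differentiable ℝ (deriv f) := hcd1.differentiable one_ne_zero
  have hlt : x < x + h := by linarith
  have hcont : ContDiffOn ℝ 1 f (Set.Icc x (x + h)) := (hf.of_le (by norm_num)).contDiffOn
  have hdiffOn : DifferentiableOn ℝ (iteratedDerivWithin 1 f (Set.Icc x (x + h)))
      (Set.Ioo x (x + h)) := by
    refine (hd2.differentiableOn).congr fun y hy => ?_
    rw [iteratedDerivWithin_Icc_eq f 1 hy, iteratedDeriv_one]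
  obtain ⟨ξ, hξ, hT⟩ := taylor_mean_remainder_lagrange (n := 1) hlt.ne
    (by rw [Set.uIcc_of_le hlt.le]; exact hcont)
    (by rw [Set.uIcc_of_le hlt.le, Set.uIoo_of_le hlt.le]; exact hdiffOn)
  rw [Set.uIcc_of_le hlt.le] at hT
  rw [Set.uIoo_of_le hlt.le] at hξ
  have hIter2 : iteratedDerivWithin (1 + 1) f (Set.Icc x (x + h)) ξ = deriv (deriv f) ξ := by
    rw [iteratedDerivWithin_Icc_eq f 2 hξ, iteratedDeriv_succ, iteratedDeriv_one]
  have hTay : taylorWithinEval f 1 (Set.Icc x (x + h)) x (x + h)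
      = f x + h * deriv f x := by
    rw [taylorWithinEval_succ, taylor_within_zero_eval]
    have hu : UniqueDiffWithinAt ℝ (Set.Icc x (x + h)) x :=
      (uniqueDiffOn_Icc hlt) x (Set.left_mem_Icc.mpr hlt.le)
    rw [iteratedDerivWithin_one, (hd1 x).derivWithin hu]
    simp
  rw [hIter2, hTay] at hT
  have hkey : deriv f x * h = f (x + h) - f x - deriv (deriv f) ξ * (h ^ 2 / 2) := by
    have : (x + h - x) ^ (1 + 1) = h ^ 2 := by ring_nf
    rw [this] at hT
    norm_num [Nat.factorial] at hT
    linarith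
  have hp : (0 : ℝ) ≤ h ^ 2 / 2 := by positivity
  have hA := abs_le.mp (h0 (x + h))
  have hB := abs_le.mp (h0 x)
  have hC := abs_le.mp (h2 ξ)
  have u1 : deriv (deriv f) ξ * (h ^ 2 / 2) ≤ C2 * (h ^ 2 / 2) :=
    mul_le_mul_of_nonneg_right hC.2 hp
  have u2 : -(C2 * (h ^ 2 / 2)) ≤ deriv (deriv f) ξ * (h ^ 2 / 2) := by nlinarith
  rw [show |deriv f x| * h = |deriv f x * h| by rw [abs_mul, abs_of_pos hh], hkey]
  rw [abs_le]
  constructor <;> nlinarith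

/-- Landau's inequality: for a bounded C² function `f : ℝ → ℝ` with bounded second
derivative, `‖f'‖_∞² ≤ 4 ‖f‖_∞ ‖f''‖_∞`, sup norms over ℝ. -/
theorem landau_inequality (f : ℝ → ℝ)
    (hf : ContDiff ℝ 2 f)
    (hfb : BddAbove (Set.range fun x => |f x|))
    (hf''b : BddAbove (Set.range fun x => |deriv (deriv f) x|)) :
    (⨆ x : ℝ, |deriv f x|) ^ 2 ≤ 4 * (⨆ x : ℝ, |f x|) * ⨆ x : ℝ, |deriv (deriv f) x| := by
  set M0 := ⨆ x : ℝ, |f x| with hM0def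
  set M2 := ⨆ x : ℝ, |deriv (deriv f) x| with hM2def
  have hM0 : ∀ x, |f x| ≤ M0 := fun x => le_ciSup hfb x
  have hM2 : ∀ x, |deriv (deriv f) x| ≤ M2 := fun x => le_ciSup hf''b x
  have hM0n : (0 : ℝ) ≤ M0 := (abs_nonneg _).trans (hM0 0)
  have hM2n : (0 : ℝ) ≤ M2 := (abs_nonneg _).trans (hM2 0)
  have key : ∀ x, |deriv f x| ^ 2 ≤ 4 * M0 * M2 := by
    intro x
    rcases eq_or_lt_of_le (abs_nonneg (deriv f x)) with ha | ha
    · rw [← ha]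
      simpa using mul_nonneg (mul_nonneg (by norm_num : (0:ℝ) ≤ 4) hM0n) hM2n
    rcases eq_or_lt_of_le hM2n with hz | hz
    · exfalso
      have hstep := landau_step f hf hM0 hM2 x ((2 * M0 + 1) / |deriv f x|)
        (div_pos (by linarith) ha)
      rw [← hz] at hstep
      have heq : |deriv f x| * ((2 * M0 + 1) / |deriv f x|) = 2 * M0 + 1 := by
        field_simp
      rw [heq] at hstep
      linarith
    · have hstep := landau_step f hf hM0 hM2 x (|deriv f x| / M2) (by positivity)
      have hM2' : M2 ≠ 0 := ne_of_gt hz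
      rw [div_pow] at hstep
      have h' := mul_le_mul_of_nonneg_right hstep hM2n
      have e1 : |deriv f x| * (|deriv f x| / M2) * M2 = |deriv f x| ^ 2 := by
        field_simp
      have e2 : (2 * M0 + M2 * (|deriv f x| ^ 2 / M2 ^ 2 / 2)) * M2
          = 2 * M0 * M2 + |deriv f x| ^ 2 / 2 := by
        field_simp
      rw [e1, e2] at h'
      linarith
  have hb : BddAbove (Set.range fun x => |deriv f x|) := by
    refine ⟨Real.sqrt (4 * M0 * M2), ?_⟩
    rintro _ ⟨x, rfl⟩
    exact (Real.le_sqrt (abs_nonneg _) (by positivity)).mpr (key x)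
  have hsup : (⨆ x : ℝ, |deriv f x|) ≤ Real.sqrt (4 * M0 * M2) :=
    ciSup_le fun x => (Real.le_sqrt (abs_nonneg _) (by positivity)).mpr (key x)
  have hsupn : (0 : ℝ) ≤ ⨆ x : ℝ, |deriv f x| :=
    Real.iSup_nonneg fun x => abs_nonneg _
  calc (⨆ x : ℝ, |deriv f x|) ^ 2 ≤ (Real.sqrt (4 * M0 * M2)) ^ 2 :=
        pow_le_pow_left₀ hsupn hsup 2
    _ = 4 * M0 * M2 := Real.sq_sqrt (by positivity)
end

section
/- Let r > 1, κ ∈ ℝ, and let λ be a mask of type (r,κ). Then there is a constant a₃ > 0 such that for all m ≥ 1, ∫_{|x| ≥ m} |x λ''(x)| dx ≤ a₃ m^{-r} (log(m+1))^{-κ}. -/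
open Real MeasureTheory

/-- `lam` is a mask of type `(r, κ)` with constant `a₁` witnessed by `F`. -/
def IsMask (r κ : ℝ) (lam : ℝ → ℝ) : Prop :=
  (∀ x : ℝ, lam (-x) = lam x) ∧ ContDiff ℝ 2 lam ∧
    ∃ (F : ℝ → ℝ) (a₁ : ℝ), ContDiff ℝ 2 F ∧
      (∀ t : ℝ, 1 ≤ t → lam t = t ^ (-r) * (Real.log (t + 1)) ^ (-κ) * F (Real.log t)) ∧
      (∀ t : ℝ, 1 ≤ t → ∀ k : ℕ, k ≤ 2 → |iteratedDeriv k F t| ≤ a₁)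

noncomputable section
variable (r κ : ℝ) (F : ℝ → ℝ)

def G (t : ℝ) : ℝ := t ^ (-r) * (Real.log (t + 1)) ^ (-κ) * F (Real.log t)

def G1 (t : ℝ) : ℝ :=
  ((-r * t ^ (-r - 1)) * (Real.log (t+1)) ^ (-κ)
    + t ^ (-r) * (-κ * (Real.log (t+1)) ^ (-κ - 1) * (t+1)⁻¹)) * F (Real.log t)
  + (t ^ (-r) * (Real.log (t+1)) ^ (-κ)) * (deriv F (Real.log t) * t⁻¹)

def G2 (t : ℝ) : ℝ :=
  (((-r * ((-r - 1) * t ^ (-r - 1 - 1))) * (Real.log (t+1)) ^ (-κ)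
      + (-r * t ^ (-r - 1)) * (-κ * (Real.log (t+1)) ^ (-κ - 1) * (t+1)⁻¹)
    + ((-r * t ^ (-r - 1)) * (-κ * (Real.log (t+1)) ^ (-κ - 1) * (t+1)⁻¹)
      + t ^ (-r) * ((-κ * ((-κ - 1) * (Real.log (t+1)) ^ (-κ - 1 - 1) * (t+1)⁻¹)) * (t+1)⁻¹
          + (-κ * (Real.log (t+1)) ^ (-κ - 1)) * (-((t+1) ^ 2)⁻¹)))) * F (Real.log t)
    + ((-r * t ^ (-r - 1)) * (Real.log (t+1)) ^ (-κ)
        + t ^ (-r) * (-κ * (Real.log (t+1)) ^ (-κ - 1) * (t+1)⁻¹)) * (deriv F (Real.log t) * t⁻¹))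
  + (((-r * t ^ (-r - 1)) * (Real.log (t+1)) ^ (-κ)
      + t ^ (-r) * (-κ * (Real.log (t+1)) ^ (-κ - 1) * (t+1)⁻¹)) * (deriv F (Real.log t) * t⁻¹)
    + (t ^ (-r) * (Real.log (t+1)) ^ (-κ)) *
        ((deriv (deriv F) (Real.log t) * t⁻¹) * t⁻¹ + deriv F (Real.log t) * (-(t ^ 2)⁻¹)))

theorem hasG1 (hF : ContDiff ℝ 2 F) {t : ℝ} (ht : 1 < t) :
    HasDerivAt (G r κ F) (G1 r κ F t) t := by
  have ht0 : (0:ℝ) < t := by linarith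
  have ht1 : (0:ℝ) < t + 1 := by linarith
  have hL : 0 < Real.log (t+1) := Real.log_pos (by linarith)
  have hP : HasDerivAt (fun t : ℝ => t ^ (-r)) (-r * t ^ (-r - 1)) t := by
    simpa using Real.hasDerivAt_rpow_const (p := -r) (Or.inl ht0.ne')
  have hl : HasDerivAt (fun t : ℝ => Real.log (t+1)) ((t+1)⁻¹) t := by
    simpa [Function.comp_def] using (Real.hasDerivAt_log ht1.ne').comp t ((hasDerivAt_id t).add_const 1)
  have hQ : HasDerivAt (fun t : ℝ => (Real.log (t+1)) ^ (-κ))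
      (-κ * (Real.log (t+1)) ^ (-κ - 1) * (t+1)⁻¹) t := by
    have := hl.rpow_const (p := -κ) (Or.inl hL.ne'); convert this using 1; ring
  have hR : HasDerivAt (fun t : ℝ => F (Real.log t)) (deriv F (Real.log t) * t⁻¹) t :=
    (((hF.differentiable (by norm_num)) (Real.log t)).hasDerivAt).comp t
      (Real.hasDerivAt_log ht0.ne')
  exact (hP.mul hQ).mul hR

theorem hasG2 (hF : ContDiff ℝ 2 F) {t : ℝ} (ht : 1 < t) :
    HasDerivAt (G1 r κ F) (G2 r κ F t) t := by
  have ht0 : (0:ℝ) < t := by linarith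
  have ht1 : (0:ℝ) < t + 1 := by linarith
  have hL : 0 < Real.log (t+1) := Real.log_pos (by linarith)
  have hl : HasDerivAt (fun t : ℝ => Real.log (t+1)) ((t+1)⁻¹) t := by
    simpa [Function.comp_def] using (Real.hasDerivAt_log ht1.ne').comp t ((hasDerivAt_id t).add_const 1)
  have hP : HasDerivAt (fun t : ℝ => t ^ (-r)) (-r * t ^ (-r - 1)) t := by
    simpa using Real.hasDerivAt_rpow_const (p := -r) (Or.inl ht0.ne')
  have hQ : HasDerivAt (fun t : ℝ => (Real.log (t+1)) ^ (-κ))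
      (-κ * (Real.log (t+1)) ^ (-κ - 1) * (t+1)⁻¹) t := by
    have := hl.rpow_const (p := -κ) (Or.inl hL.ne'); convert this using 1; ring
  have hQ2 : HasDerivAt (fun t : ℝ => (Real.log (t+1)) ^ (-κ - 1))
      ((-κ - 1) * (Real.log (t+1)) ^ (-κ - 1 - 1) * (t+1)⁻¹) t := by
    have := hl.rpow_const (p := -κ - 1) (Or.inl hL.ne'); convert this using 1; ring
  have hAfac : HasDerivAt (fun t : ℝ => -r * t ^ (-r - 1)) (-r * ((-r - 1) * t ^ (-r - 1 - 1))) t :=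
    HasDerivAt.const_mul (-r) (by simpa using Real.hasDerivAt_rpow_const (p := -r - 1) (Or.inl ht0.ne'))
  have hinv : HasDerivAt (fun t : ℝ => (t+1)⁻¹) (-((t+1) ^ 2)⁻¹) t := by
    simpa [Function.comp_def] using (hasDerivAt_inv ht1.ne').comp t ((hasDerivAt_id t).add_const 1)
  have hinvt : HasDerivAt (fun t : ℝ => t⁻¹) (-(t ^ 2)⁻¹) t := hasDerivAt_inv ht0.ne'
  have hF' : Differentiable ℝ (deriv F) :=
    ((contDiff_succ_iff_deriv.mp (by exact_mod_cast hF : ContDiff ℝ (1+1) F)).2.2).differentiable one_ne_zero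
  have hR : HasDerivAt (fun t : ℝ => F (Real.log t)) (deriv F (Real.log t) * t⁻¹) t :=
    (((hF.differentiable (by norm_num)) (Real.log t)).hasDerivAt).comp t (Real.hasDerivAt_log ht0.ne')
  have hF1 : HasDerivAt (fun t : ℝ => deriv F (Real.log t)) (deriv (deriv F) (Real.log t) * t⁻¹) t :=
    ((hF' (Real.log t)).hasDerivAt).comp t (Real.hasDerivAt_log ht0.ne')
  have hB2 : HasDerivAt (fun t : ℝ => -κ * (Real.log (t+1)) ^ (-κ - 1) * (t+1)⁻¹)
      ((-κ * ((-κ - 1) * (Real.log (t+1)) ^ (-κ - 1 - 1) * (t+1)⁻¹)) * (t+1)⁻¹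
        + (-κ * (Real.log (t+1)) ^ (-κ - 1)) * (-((t+1) ^ 2)⁻¹)) t :=
    (hQ2.const_mul (-κ)).mul hinv
  exact ((((hAfac.mul hQ).add (hP.mul hB2)).mul hR).add ((hP.mul hQ).mul (hF1.mul hinvt)))
end

noncomputable section
variable (r κ : ℝ) (F : ℝ → ℝ)

def H (t : ℝ) : ℝ :=
  (r*(r+1)) * F (Real.log t)
  + (2*r*κ) * (Real.log (t+1))⁻¹ * (t*(t+1)⁻¹) * F (Real.log t)
  + (κ*(κ+1)) * ((Real.log (t+1))⁻¹)^2 * (t*(t+1)⁻¹)^2 * F (Real.log t)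
  + κ * (Real.log (t+1))⁻¹ * (t*(t+1)⁻¹)^2 * F (Real.log t)
  + (-(2*r) - 1) * deriv F (Real.log t)
  + (-(2*κ)) * (Real.log (t+1))⁻¹ * (t*(t+1)⁻¹) * deriv F (Real.log t)
  + deriv (deriv F) (Real.log t)

theorem G2_eq {t : ℝ} (ht : 1 < t) :
    G2 r κ F t = t ^ (-r - 2) * (Real.log (t+1)) ^ (-κ) * H r κ F t := by
  have ht0 : (0:ℝ) < t := by linarith
  have ht1 : (0:ℝ) < t + 1 := by linarith
  have hL : 0 < Real.log (t+1) := Real.log_pos (by linarith)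
  have e1 : t ^ (-r - 1 - 1) = t ^ (-r - 2) := by rw [show (-r - 1 - 1 : ℝ) = -r - 2 by ring]
  have e2 : t ^ (-r - 1) = t ^ (-r - 2) * t := by
    rw [show (-r - 1 : ℝ) = (-r - 2) + 1 by ring, Real.rpow_add ht0, Real.rpow_one]
  have e3 : t ^ (-r) = t ^ (-r - 2) * t * t := by
    have h1 : t ^ (-r - 2) * t ^ (1:ℝ) = t ^ (-r - 1) := by
      rw [← Real.rpow_add ht0]; congr 1; ring
    have h2 : t ^ (-r - 1) * t ^ (1:ℝ) = t ^ (-r) := by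
      rw [← Real.rpow_add ht0]; congr 1; ring
    rw [← h2, ← h1, Real.rpow_one]
  have f1 : (Real.log (t+1)) ^ (-κ - 1) = (Real.log (t+1)) ^ (-κ) * (Real.log (t+1))⁻¹ := by
    rw [show (-κ - 1 : ℝ) = (-κ) + (-1) by ring, Real.rpow_add hL, Real.rpow_neg_one]
  have f2 : (Real.log (t+1)) ^ (-κ - 1 - 1)
      = (Real.log (t+1)) ^ (-κ) * (Real.log (t+1))⁻¹ * (Real.log (t+1))⁻¹ := by
    rw [show (-κ - 1 - 1 : ℝ) = (-κ) + (-1) + (-1) by ring, Real.rpow_add hL, Real.rpow_add hL,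
      Real.rpow_neg_one]
  rw [G2, H, e1, e2, e3, f1, f2]
  field_simp
  ring
end

theorem prod_bound {c l τ x cb lb xb : ℝ} (hc : |c| ≤ cb) (hl0 : 0 ≤ l) (hl : l ≤ lb)
    (ht0 : 0 ≤ τ) (ht1 : τ ≤ 1) (hx : |x| ≤ xb) : |c * l * τ * x| ≤ cb * lb * xb := by
  have hxb : (0:ℝ) ≤ xb := (abs_nonneg x).trans hx
  rw [abs_mul, abs_mul, abs_mul, abs_of_nonneg hl0, abs_of_nonneg ht0]
  have hcb : (0:ℝ) ≤ cb := (abs_nonneg c).trans hc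
  have hlb : (0:ℝ) ≤ lb := hl0.trans hl
  calc |c| * l * τ * |x| ≤ cb * lb * 1 * xb :=
        mul_le_mul (mul_le_mul (mul_le_mul hc hl hl0 hcb) ht1 ht0 (mul_nonneg hcb hlb)) hx
          (abs_nonneg x) (by positivity)
    _ = cb * lb * xb := by ring

theorem H_bound (r κ : ℝ) (F : ℝ → ℝ) (hr : 0 < r) (A : ℝ) {t : ℝ} (ht : 1 < t)
    (h0 : |F (Real.log t)| ≤ A) (h1 : |deriv F (Real.log t)| ≤ A)
    (h2 : |deriv (deriv F) (Real.log t)| ≤ A) :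
    |H r κ F t| ≤ (r*(r+1) + 2*r*|κ| *(Real.log 2)⁻¹ + |κ*(κ+1)| *((Real.log 2)⁻¹)^2
      + |κ| *(Real.log 2)⁻¹ + (2*r+1) + 2*|κ| *(Real.log 2)⁻¹ + 1) * A := by
  have hA : 0 ≤ A := (abs_nonneg _).trans h0
  have hl2 : 0 < Real.log 2 := Real.log_pos (by norm_num)
  have hL2 : Real.log 2 ≤ Real.log (t+1) := Real.log_le_log (by norm_num) (by linarith)
  have hLpos : 0 < Real.log (t+1) := lt_of_lt_of_le hl2 hL2
  have hβ : (Real.log (t+1))⁻¹ ≤ (Real.log 2)⁻¹ := inv_anti₀ hl2 hL2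
  have hβ0 : 0 ≤ (Real.log (t+1))⁻¹ := inv_nonneg.mpr hLpos.le
  have hβ20 : 0 ≤ ((Real.log (t+1))⁻¹)^2 := by positivity
  have hβ2 : ((Real.log (t+1))⁻¹)^2 ≤ ((Real.log 2)⁻¹)^2 := pow_le_pow_left₀ hβ0 hβ 2
  have hτ0 : 0 ≤ t*(t+1)⁻¹ := by positivity
  have hτ1 : t*(t+1)⁻¹ ≤ 1 := by
    rw [← div_eq_mul_inv, div_le_one (by linarith)]; linarith
  have hτ20 : 0 ≤ (t*(t+1)⁻¹)^2 := by positivity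
  have hτ2 : (t*(t+1)⁻¹)^2 ≤ 1 := pow_le_one₀ hτ0 hτ1
  set ℓ := (Real.log (t+1))⁻¹ with hldef
  set τ := t*(t+1)⁻¹ with htdef
  set F0 := F (Real.log t); set F1 := deriv F (Real.log t); set F2 := deriv (deriv F) (Real.log t)
  have B1 : |(r*(r+1)) * 1 * 1 * F0| ≤ (r*(r+1)) * 1 * A :=
    prod_bound (by rw [abs_of_nonneg (by positivity : (0:ℝ) ≤ r*(r+1))]) zero_le_one le_rfl
      zero_le_one le_rfl h0
  have B2 : |(2*r*κ) * ℓ * τ * F0| ≤ (2*r*|κ|) * (Real.log 2)⁻¹ * A :=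
    prod_bound (by rw [abs_mul, abs_mul]; simp [abs_of_nonneg, hr.le]) hβ0 hβ hτ0 hτ1 h0
  have B3 : |(κ*(κ+1)) * ℓ^2 * τ^2 * F0| ≤ |κ*(κ+1)| * ((Real.log 2)⁻¹)^2 * A :=
    prod_bound le_rfl hβ20 hβ2 hτ20 hτ2 h0
  have B4 : |κ * ℓ * τ^2 * F0| ≤ |κ| * (Real.log 2)⁻¹ * A :=
    prod_bound le_rfl hβ0 hβ hτ20 hτ2 h0
  have B5 : |(-(2*r) - 1) * 1 * 1 * F1| ≤ (2*r+1) * 1 * A :=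
    prod_bound (by rw [abs_of_nonpos (by linarith)]; ring_nf; exact le_rfl) zero_le_one le_rfl
      zero_le_one le_rfl h1
  have B6 : |(-(2*κ)) * ℓ * τ * F1| ≤ (2*|κ|) * (Real.log 2)⁻¹ * A :=
    prod_bound (by rw [abs_neg, abs_mul]; simp) hβ0 hβ hτ0 hτ1 h1
  have B7 : |(1:ℝ) * 1 * 1 * F2| ≤ 1 * 1 * A :=
    prod_bound (by norm_num) zero_le_one le_rfl zero_le_one le_rfl h2
  have hHeq : H r κ F t = (r*(r+1)) * 1 * 1 * F0 + (2*r*κ) * ℓ * τ * F0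
      + (κ*(κ+1)) * ℓ^2 * τ^2 * F0 + κ * ℓ * τ^2 * F0 + (-(2*r) - 1) * 1 * 1 * F1
      + (-(2*κ)) * ℓ * τ * F1 + (1:ℝ) * 1 * 1 * F2 := by
    rw [H]; ring
  rw [hHeq]
  have tri : |(r*(r+1)) * 1 * 1 * F0 + (2*r*κ) * ℓ * τ * F0
      + (κ*(κ+1)) * ℓ^2 * τ^2 * F0 + κ * ℓ * τ^2 * F0 + (-(2*r) - 1) * 1 * 1 * F1
      + (-(2*κ)) * ℓ * τ * F1 + (1:ℝ) * 1 * 1 * F2|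
      ≤ |(r*(r+1)) * 1 * 1 * F0| + |(2*r*κ) * ℓ * τ * F0|
      + |(κ*(κ+1)) * ℓ^2 * τ^2 * F0| + |κ * ℓ * τ^2 * F0| + |(-(2*r) - 1) * 1 * 1 * F1|
      + |(-(2*κ)) * ℓ * τ * F1| + |(1:ℝ) * 1 * 1 * F2| := by
    refine le_trans (abs_add_le _ _) (add_le_add ?_ le_rfl)
    refine le_trans (abs_add_le _ _) (add_le_add ?_ le_rfl)
    refine le_trans (abs_add_le _ _) (add_le_add ?_ le_rfl)
    refine le_trans (abs_add_le _ _) (add_le_add ?_ le_rfl)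
    refine le_trans (abs_add_le _ _) (add_le_add ?_ le_rfl)
    exact abs_add_le _ _
  refine tri.trans ?_
  have := add_le_add (add_le_add (add_le_add (add_le_add (add_le_add (add_le_add B1 B2) B3) B4) B5) B6) B7
  calc _ ≤ _ := this
    _ = _ := by ring

theorem F_bounds (F : ℝ → ℝ) (a₁ : ℝ) (hFc : ContDiff ℝ 2 F)
    (hbd : ∀ t : ℝ, 1 ≤ t → ∀ k : ℕ, k ≤ 2 → |iteratedDeriv k F t| ≤ a₁) :
    ∃ A : ℝ, 1 ≤ A ∧ ∀ u : ℝ, 0 ≤ u →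
      |F u| ≤ A ∧ |deriv F u| ≤ A ∧ |deriv (deriv F) u| ≤ A := by
  have hF' : ContDiff ℝ 1 (deriv F) :=
    (contDiff_succ_iff_deriv.mp (by exact_mod_cast hFc : ContDiff ℝ (1+1) F)).2.2
  have hc0 : ContinuousOn F (Set.Icc 0 1) := hFc.continuous.continuousOn
  have hc1 : ContinuousOn (deriv F) (Set.Icc 0 1) :=
    ((contDiff_one_iff_deriv.mp hF').1.continuous).continuousOn
  have hc2 : ContinuousOn (deriv (deriv F)) (Set.Icc 0 1) :=
    (contDiff_one_iff_deriv.mp hF').2.continuousOn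
  obtain ⟨b0, hb0⟩ := isCompact_Icc.exists_bound_of_continuousOn hc0
  obtain ⟨b1, hb1⟩ := isCompact_Icc.exists_bound_of_continuousOn hc1
  obtain ⟨b2, hb2⟩ := isCompact_Icc.exists_bound_of_continuousOn hc2
  have i2 : iteratedDeriv 2 F = deriv (deriv F) := by
    rw [iteratedDeriv_succ, iteratedDeriv_one]
  have i1 : iteratedDeriv 1 F = deriv F := iteratedDeriv_one
  have i0 : iteratedDeriv 0 F = F := iteratedDeriv_zero
  refine ⟨max 1 (max a₁ (max b0 (max b1 b2))), le_max_left _ _, fun u hu => ?_⟩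
  rcases le_or_gt 1 u with h1 | h1
  · have k0 := hbd u h1 0 (by norm_num); rw [i0] at k0
    have k1 := hbd u h1 1 (by norm_num); rw [i1] at k1
    have k2 := hbd u h1 2 le_rfl; rw [i2] at k2
    have ha : a₁ ≤ max 1 (max a₁ (max b0 (max b1 b2))) :=
      le_max_of_le_right (le_max_left _ _)
    exact ⟨k0.trans ha, k1.trans ha, k2.trans ha⟩
  · have hmem : u ∈ Set.Icc (0:ℝ) 1 := ⟨hu, h1.le⟩
    refine ⟨((hb0 u hmem).trans ?_), ((hb1 u hmem).trans ?_), ((hb2 u hmem).trans ?_)⟩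
    · exact le_max_of_le_right (le_max_of_le_right (le_max_left _ _))
    · exact le_max_of_le_right (le_max_of_le_right (le_max_of_le_right (le_max_left _ _)))
    · exact le_max_of_le_right (le_max_of_le_right (le_max_of_le_right (le_max_right _ _)))

theorem pointwise_bound (r κ : ℝ) (hr : 1 < r) (lam F : ℝ → ℝ) (a₁ : ℝ)
    (hlamC : ContDiff ℝ 2 lam) (hFc : ContDiff ℝ 2 F)
    (heq : ∀ t : ℝ, 1 ≤ t → lam t = t ^ (-r) * (Real.log (t + 1)) ^ (-κ) * F (Real.log t))
    (hbd : ∀ t : ℝ, 1 ≤ t → ∀ k : ℕ, k ≤ 2 → |iteratedDeriv k F t| ≤ a₁) :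
    ∃ C > (0:ℝ), ∀ t : ℝ, 1 < t →
      |t * deriv (deriv lam) t| ≤ C * t ^ (-r - 1) * Real.log (t+1) ^ (-κ) := by
  obtain ⟨A, hA1, hA⟩ := F_bounds F a₁ hFc hbd
  have hl2 : 0 < Real.log 2 := Real.log_pos (by norm_num)
  set CH : ℝ := r*(r+1) + 2*r*|κ| * (Real.log 2)⁻¹ + |κ*(κ+1)| * ((Real.log 2)⁻¹)^2
      + |κ| * (Real.log 2)⁻¹ + (2*r+1) + 2*|κ| * (Real.log 2)⁻¹ + 1 with hCHdef
  have hβ0 : (0:ℝ) ≤ (Real.log 2)⁻¹ := by positivity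
  have hCH : 0 < CH := by
    have n1 : (0:ℝ) ≤ 2*r*|κ| * (Real.log 2)⁻¹ :=
      mul_nonneg (mul_nonneg (by linarith) (abs_nonneg _)) hβ0
    have n2 : (0:ℝ) ≤ |κ*(κ+1)| * ((Real.log 2)⁻¹)^2 :=
      mul_nonneg (abs_nonneg _) (by positivity)
    have n3 : (0:ℝ) ≤ |κ| * (Real.log 2)⁻¹ := mul_nonneg (abs_nonneg _) hβ0
    have n4 : (0:ℝ) ≤ 2*|κ| * (Real.log 2)⁻¹ := mul_nonneg (by positivity) hβ0
    have : (0:ℝ) < r*(r+1) := by nlinarith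
    rw [hCHdef]; linarith
  refine ⟨CH * A, by positivity, fun t ht => ?_⟩
  have ht0 : (0:ℝ) < t := by linarith
  have hLpos : 0 < Real.log (t+1) := Real.log_pos (by linarith)
  -- identify the second derivative
  have hd1 : ∀ y : ℝ, 1 < y → deriv lam y = G1 r κ F y := by
    intro y hy
    have hev : lam =ᶠ[nhds y] G r κ F :=
      Filter.eventuallyEq_of_mem (isOpen_Ioi.mem_nhds hy) (fun z hz => heq z (le_of_lt hz))
    rw [hev.deriv_eq]
    exact (hasG1 r κ F hFc hy).deriv
  have hd2 : deriv (deriv lam) t = G2 r κ F t := by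
    have hev : deriv lam =ᶠ[nhds t] G1 r κ F :=
      Filter.eventuallyEq_of_mem (isOpen_Ioi.mem_nhds ht) (fun z hz => hd1 z hz)
    rw [hev.deriv_eq]
    exact (hasG2 r κ F hFc ht).deriv
  rw [hd2, G2_eq r κ F ht]
  obtain ⟨k0, k1, k2⟩ := hA (Real.log t) (Real.log_nonneg (by linarith))
  have hHb := H_bound r κ F (by linarith) A ht k0 k1 k2
  have e : t ^ (-r - 1) = t * t ^ (-r - 2) := by
    rw [show (-r - 1 : ℝ) = 1 + (-r - 2) by ring, Real.rpow_add ht0, Real.rpow_one]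
  calc |t * (t ^ (-r - 2) * Real.log (t+1) ^ (-κ) * H r κ F t)|
      = (t * t ^ (-r - 2) * Real.log (t+1) ^ (-κ)) * |H r κ F t| := by
        rw [abs_mul, abs_mul, abs_mul, abs_of_pos ht0,
          abs_of_nonneg (Real.rpow_nonneg ht0.le _), abs_of_nonneg (Real.rpow_nonneg hLpos.le _)]
        ring
    _ ≤ (t * t ^ (-r - 2) * Real.log (t+1) ^ (-κ)) * (CH * A) := by
        apply mul_le_mul_of_nonneg_left (by rw [hCHdef]; exact hHb) ?_
        have := Real.rpow_nonneg ht0.le (-r-2)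
        have := Real.rpow_nonneg hLpos.le (-κ)
        positivity
    _ = CH * A * t ^ (-r - 1) * Real.log (t+1) ^ (-κ) := by rw [e]; ring

theorem D2_even (lam : ℝ → ℝ) (hC : ContDiff ℝ 2 lam) (he : ∀ x, lam (-x) = lam x) :
    ∀ x, deriv (deriv lam) (-x) = deriv (deriv lam) x := by
  have hdiff : Differentiable ℝ lam := hC.differentiable (by norm_num)
  have hd1 : Differentiable ℝ (deriv lam) :=
    ((contDiff_succ_iff_deriv.mp (by exact_mod_cast hC : ContDiff ℝ (1+1) lam)).2.2).differentiable
      one_ne_zero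
  have hodd : ∀ x, deriv lam (-x) = - deriv lam x := by
    intro x
    have h1 : HasDerivAt (fun y : ℝ => lam (-y)) (deriv lam (-x) * (-1)) x :=
      ((hdiff (-x)).hasDerivAt).comp x (hasDerivAt_neg' x)
    rw [funext fun y => he y] at h1
    have h2 := h1.deriv
    linarith [h2]
  intro x
  have h1 : HasDerivAt (fun y : ℝ => deriv lam (-y)) (deriv (deriv lam) (-x) * (-1)) x :=
    ((hd1 (-x)).hasDerivAt).comp x (hasDerivAt_neg' x)
  have feq : (fun y : ℝ => deriv lam (-y)) = (fun y : ℝ => - deriv lam y) := funext hodd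
  rw [feq] at h1
  have h2 : HasDerivAt (fun y : ℝ => - deriv lam y) (-(deriv (deriv lam) x)) x :=
    ((hd1 x).hasDerivAt).neg
  have := h1.unique h2
  linarith

theorem dom_bound (r κ : ℝ) (hr : 1 < r) : ∃ K > (0:ℝ), ∀ m t : ℝ, 1 ≤ m → m ≤ t →
    t ^ (-r - 1) * Real.log (t+1) ^ (-κ)
      ≤ K * (m ^ (-((r-1)/2)) * Real.log (m+1) ^ (-κ)) * t ^ (-((r+1)/2) - 1) := by
  have hl2 : 0 < Real.log 2 := Real.log_pos (by norm_num)
  set δ : ℝ := (r-1)/2 with hδ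
  have hδ0 : 0 < δ := by rw [hδ]; linarith
  -- main reduction
  have main : ∀ K ≥ (1:ℝ), (∀ m t : ℝ, 1 ≤ m → m ≤ t →
      t ^ (-δ) * Real.log (t+1) ^ (-κ) ≤ K * (m ^ (-δ) * Real.log (m+1) ^ (-κ))) →
      ∀ m t : ℝ, 1 ≤ m → m ≤ t →
      t ^ (-r - 1) * Real.log (t+1) ^ (-κ)
        ≤ K * (m ^ (-δ) * Real.log (m+1) ^ (-κ)) * t ^ (-((r+1)/2) - 1) := by
    intro K hK h m t hm hmt
    have ht0 : (0:ℝ) < t := by linarith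
    have e : t ^ (-r - 1) = t ^ (-δ) * t ^ (-((r+1)/2) - 1) := by
      rw [← Real.rpow_add ht0]; congr 1; rw [hδ]; ring
    calc t ^ (-r - 1) * Real.log (t+1) ^ (-κ)
        = (t ^ (-δ) * Real.log (t+1) ^ (-κ)) * t ^ (-((r+1)/2) - 1) := by rw [e]; ring
      _ ≤ K * (m ^ (-δ) * Real.log (m+1) ^ (-κ)) * t ^ (-((r+1)/2) - 1) := by
          apply mul_le_mul_of_nonneg_right (h m t hm hmt) (Real.rpow_nonneg ht0.le _)
  rcases le_or_gt 0 κ with hκ | hκ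
  · refine ⟨1, one_pos, main 1 le_rfl ?_⟩
    intro m t hm hmt
    have hm0 : (0:ℝ) < m := by linarith
    have hLm : 0 < Real.log (m+1) := Real.log_pos (by linarith)
    rw [one_mul]
    apply mul_le_mul
    · exact Real.rpow_le_rpow_of_nonpos hm0 hmt (by linarith)
    · exact Real.rpow_le_rpow_of_nonpos hLm (Real.log_le_log (by linarith) (by linarith))
        (by linarith)
    · exact Real.rpow_nonneg (Real.log_nonneg (by linarith)) _
    · exact Real.rpow_nonneg hm0.le _
  · -- κ < 0
    set ε : ℝ := δ / (-κ) with hε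
    have hε0 : 0 < ε := div_pos hδ0 (by linarith)
    set c : ℝ := 1 + 1/(ε * Real.log 2) with hc
    have hc1 : 1 ≤ c := by
      rw [hc]; have : 0 < 1/(ε * Real.log 2) := by positivity
      linarith
    refine ⟨c ^ (-κ), Real.rpow_pos_of_pos (by linarith) _, main _ ?_ ?_⟩
    · calc (1:ℝ) = 1 ^ (-κ) := (Real.one_rpow _).symm
        _ ≤ c ^ (-κ) := Real.rpow_le_rpow zero_le_one hc1 (by linarith)
    intro m t hm hmt
    have hm0 : (0:ℝ) < m := by linarith
    have ht0 : (0:ℝ) < t := by linarith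
    have ht1 : (1:ℝ) ≤ t := le_trans hm hmt
    have hw1 : (1:ℝ) ≤ t/m := (one_le_div hm0).mpr hmt
    have hw0 : (0:ℝ) < t/m := lt_of_lt_of_le one_pos hw1
    have hLm : Real.log 2 ≤ Real.log (m+1) := Real.log_le_log (by norm_num) (by linarith)
    have hLm0 : 0 < Real.log (m+1) := lt_of_lt_of_le hl2 hLm
    -- log (t+1) ≤ log (m+1) + log (t/m)
    have step1 : Real.log (t+1) ≤ Real.log (m+1) + Real.log (t/m) := by
      rw [← Real.log_mul (by positivity : (m+1) ≠ 0) (ne_of_gt hw0)]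
      apply Real.log_le_log (by linarith)
      have hq : (m+1)*(t/m) = t + t/m := by field_simp
      rw [hq]; linarith
    -- log (t/m) ≤ (t/m)^ε / ε
    have step2 : Real.log (t/m) ≤ (t/m) ^ ε / ε := by
      have h1 : Real.log ((t/m) ^ ε) = ε * Real.log (t/m) := Real.log_rpow hw0 _
      have h2 : Real.log ((t/m) ^ ε) ≤ (t/m) ^ ε - 1 :=
        Real.log_le_sub_one_of_pos (Real.rpow_pos_of_pos hw0 _)
      have h3 : (t/m) ^ ε - 1 ≤ (t/m) ^ ε := by linarith
      rw [le_div_iff₀ hε0, mul_comm]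
      linarith [h1 ▸ h2.trans h3]
    have hwε1 : (1:ℝ) ≤ (t/m) ^ ε := by
      calc (1:ℝ) = 1 ^ ε := (Real.one_rpow _).symm
        _ ≤ (t/m) ^ ε := Real.rpow_le_rpow zero_le_one hw1 hε0.le
    set w : ℝ := (t/m) ^ ε with hwdef
    have hwpos : 0 < w := Real.rpow_pos_of_pos hw0 _
    have step3 : Real.log (t+1) ≤ Real.log (m+1) * (c * w) := by
      have k1 : Real.log (m+1) * 1 ≤ Real.log (m+1) * w :=
        mul_le_mul_of_nonneg_left hwε1 hLm0.le
      have k2 : Real.log 2 * w ≤ Real.log (m+1) * w := mul_le_mul_of_nonneg_right hLm hwpos.le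
      have k3 : w / ε = (Real.log 2 * w) / (ε * Real.log 2) := by
        field_simp
      have k4 : (Real.log 2 * w) / (ε * Real.log 2) ≤ (Real.log (m+1) * w) / (ε * Real.log 2) :=
        by gcongr
      have k5 : Real.log (m+1) * (c * w) = Real.log (m+1) * w + (Real.log (m+1) * w) / (ε * Real.log 2) := by
        rw [hc]; field_simp
      have k6 : Real.log (t/m) ≤ w / ε := by rw [hwdef] at step2 ⊢; exact step2
      rw [k5]
      calc Real.log (t+1) ≤ Real.log (m+1) + Real.log (t/m) := step1
        _ ≤ Real.log (m+1) * w + (Real.log 2 * w) / (ε * Real.log 2) := by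
            rw [← k3]; linarith
        _ ≤ _ := by linarith
    have hLt0 : 0 ≤ Real.log (t+1) := Real.log_nonneg (by linarith)
    have step4 : Real.log (t+1) ^ (-κ) ≤ Real.log (m+1) ^ (-κ) * (c ^ (-κ) * w ^ (-κ)) := by
      calc Real.log (t+1) ^ (-κ) ≤ (Real.log (m+1) * (c * w)) ^ (-κ) :=
            Real.rpow_le_rpow hLt0 step3 (by linarith)
        _ = Real.log (m+1) ^ (-κ) * (c ^ (-κ) * w ^ (-κ)) := by
            rw [Real.mul_rpow hLm0.le (by positivity), Real.mul_rpow (by linarith : (0:ℝ) ≤ c) hwpos.le]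
    have step5 : w ^ (-κ) = (t/m) ^ δ := by
      rw [hwdef, ← Real.rpow_mul hw0.le, hε, div_mul_cancel₀ _ (by linarith : -κ ≠ 0)]
    have id1 : t ^ (-δ) * ((t/m) ^ δ) = m ^ (-δ) := by
      rw [Real.div_rpow ht0.le hm0.le, Real.rpow_neg ht0.le, Real.rpow_neg hm0.le]
      field_simp
    calc t ^ (-δ) * Real.log (t+1) ^ (-κ)
        ≤ t ^ (-δ) * (Real.log (m+1) ^ (-κ) * (c ^ (-κ) * w ^ (-κ))) :=
          mul_le_mul_of_nonneg_left step4 (Real.rpow_nonneg ht0.le _)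
      _ = c ^ (-κ) * (m ^ (-δ) * Real.log (m+1) ^ (-κ)) := by
          rw [step5]
          calc t ^ (-δ) * (Real.log (m+1) ^ (-κ) * (c ^ (-κ) * (t/m) ^ δ))
              = c ^ (-κ) * ((t ^ (-δ) * (t/m) ^ δ) * Real.log (m+1) ^ (-κ)) := by ring
            _ = _ := by rw [id1]

/-- Tail bound on `∫_{|x| ≥ m} |x λ''(x)| dx` for a mask of type `(r,κ)`, `r > 1`. -/
theorem mask_second_derivative_tail_bound (r κ : ℝ) (hr : 1 < r) (lam : ℝ → ℝ)
    (hlam : IsMask r κ lam) :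
    ∃ a₃ > (0 : ℝ), ∀ m : ℕ, 1 ≤ m →
      (∫ x in {x : ℝ | (m : ℝ) ≤ |x|}, |x * deriv (deriv lam) x|) ≤
        a₃ * (m : ℝ) ^ (-r) * (Real.log (m + 1)) ^ (-κ) := by
  obtain ⟨heven, hCl, F, a₁, hFc, heq, hbd⟩ := hlam
  obtain ⟨C, hC0, hCb⟩ := pointwise_bound r κ hr lam F a₁ hCl hFc heq hbd
  obtain ⟨K, hK0, hKb⟩ := dom_bound r κ hr
  have hD2cont : Continuous (deriv (deriv lam)) := by
    have h1 : ContDiff ℝ 1 (deriv lam) :=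
      (contDiff_succ_iff_deriv.mp (by exact_mod_cast hCl : ContDiff ℝ (1+1) lam)).2.2
    exact (contDiff_one_iff_deriv.mp h1).2
  have hfe : ∀ x : ℝ, |(-x) * deriv (deriv lam) (-x)| = |x * deriv (deriv lam) x| := by
    intro x
    rw [D2_even lam hCl heven x, neg_mul, abs_neg]
  refine ⟨4*C*K/(r+1), by positivity, fun m hm => ?_⟩
  set M : ℝ := (m : ℝ) with hMdef
  have hM1 : (1:ℝ) ≤ M := by rw [hMdef]; exact_mod_cast hm
  have hM0 : (0:ℝ) < M := by linarith
  set f : ℝ → ℝ := fun x => |x * deriv (deriv lam) x| with hfdef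
  have hfc : Continuous f := (continuous_id.mul hD2cont).abs
  set gc : ℝ := C * (K * (M ^ (-((r-1)/2)) * Real.log (M+1) ^ (-κ))) with hgcdef
  have hgc0 : 0 ≤ gc := by
    have := Real.rpow_nonneg hM0.le (-((r-1)/2))
    have : (0:ℝ) ≤ Real.log (M+1) ^ (-κ) :=
      Real.rpow_nonneg (Real.log_nonneg (by linarith)) _
    positivity
  set g : ℝ → ℝ := fun t => gc * t ^ (-((r+1)/2) - 1) with hgdef
  have hexp : -((r+1)/2) - 1 < -1 := by linarith
  have hgint : IntegrableOn g (Set.Ioi M) :=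
    (integrableOn_Ioi_rpow_of_lt hexp hM0).const_mul gc
  have hpt : ∀ x ∈ Set.Ioi M, f x ≤ g x := by
    intro x hx
    have hx1 : (1:ℝ) < x := lt_of_le_of_lt hM1 hx
    calc f x ≤ C * x ^ (-r - 1) * Real.log (x+1) ^ (-κ) := hCb x hx1
      _ = C * (x ^ (-r - 1) * Real.log (x+1) ^ (-κ)) := by ring
      _ ≤ C * (K * (M ^ (-((r-1)/2)) * Real.log (M+1) ^ (-κ)) * x ^ (-((r+1)/2) - 1)) :=
          mul_le_mul_of_nonneg_left (hKb M x hM1 (le_of_lt hx)) hC0.le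
      _ = g x := by rw [hgdef, hgcdef]; ring
  have hfint : IntegrableOn f (Set.Ioi M) := by
    apply MeasureTheory.Integrable.mono hgint hfc.aestronglyMeasurable.restrict
    filter_upwards [ae_restrict_mem measurableSet_Ioi] with x hx
    have h1 : ‖f x‖ = f x := by
      rw [Real.norm_eq_abs, abs_abs]
    rw [h1]
    exact (hpt x hx).trans (le_abs_self _)
  have hIci : IntegrableOn f (Set.Ici M) := Iff.mpr integrableOn_Ici_iff_integrableOn_Ioi hfint
  have hIic : IntegrableOn f (Set.Iic (-M)) := by
    rw [← (Measure.measurePreserving_neg (volume : Measure ℝ)).integrableOn_comp_preimage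
      (Homeomorph.neg ℝ).measurableEmbedding]
    have hcomp : f ∘ Neg.neg = f := funext fun x => hfe x
    rw [hcomp, show Neg.neg ⁻¹' (Set.Iic (-M)) = Set.Ici M by
      rw [Set.neg_preimage, Set.neg_Iic, neg_neg]]
    exact hIci
  have hset : {x : ℝ | M ≤ |x|} = Set.Iic (-M) ∪ Set.Ici M := by
    ext x
    simp only [Set.mem_setOf_eq, Set.mem_union, Set.mem_Iic, Set.mem_Ici, le_abs]
    exact ⟨fun h => h.elim (fun h => Or.inr h) (fun h => Or.inl (by linarith)),
      fun h => h.elim (fun h => Or.inr (by linarith)) (fun h => Or.inl h)⟩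
  have hdisj : Disjoint (Set.Iic (-M)) (Set.Ici M) :=
    Set.Iic_disjoint_Ici.mpr (not_le.mpr (by linarith))
  have hIicEq : ∫ x in Set.Iic (-M), f x = ∫ x in Set.Ioi M, f x := by
    rw [← integral_comp_neg_Ioi]
    have hfe' : ∀ x : ℝ, f (-x) = f x := fun x => hfe x
    simp_rw [hfe']
  have hmono : ∫ x in Set.Ioi M, f x ≤ ∫ x in Set.Ioi M, g x := by
    apply integral_mono_of_nonneg (Filter.Eventually.of_forall fun x => abs_nonneg _) hgint
    filter_upwards [ae_restrict_mem measurableSet_Ioi] with x hx using hpt x hx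
  have hgval : ∫ x in Set.Ioi M, g x = gc * (M ^ (-((r+1)/2)) / ((r+1)/2)) := by
    rw [hgdef]
    rw [MeasureTheory.integral_const_mul, integral_Ioi_rpow_of_lt hexp hM0]
    rw [show (-((r+1)/2) - 1 + 1 : ℝ) = -((r+1)/2) by ring]
    rw [neg_div, div_neg, neg_neg]
  have emul : M ^ (-((r-1)/2)) * M ^ (-((r+1)/2)) = M ^ (-r) := by
    rw [← Real.rpow_add hM0, show (-((r-1)/2) + -((r+1)/2) : ℝ) = -r by ring]
  calc (∫ x in {x : ℝ | M ≤ |x|}, f x)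
      = (∫ x in Set.Iic (-M), f x) + ∫ x in Set.Ici M, f x := by
        rw [hset, setIntegral_union hdisj measurableSet_Ici hIic hIci]
    _ = (∫ x in Set.Ioi M, f x) + ∫ x in Set.Ioi M, f x := by
        rw [hIicEq, integral_Ici_eq_integral_Ioi]
    _ ≤ (∫ x in Set.Ioi M, g x) + ∫ x in Set.Ioi M, g x := add_le_add hmono hmono
    _ = 2 * (gc * (M ^ (-((r+1)/2)) / ((r+1)/2))) := by rw [hgval]; ring
    _ = 4*C*K/(r+1) * M ^ (-r) * Real.log (M+1) ^ (-κ) := by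
        rw [hgcdef, ← emul]
        field_simp
        ring
end

section
/- For d ≥ 1 and m → ∞, the cardinality of the sparse Smolyak grid satisfies ∑_{k ∈ ℤ₊^d, |k| ≤ m} ∏_{j=1}^d (2^{k_j + 1} + 1) ≍ 2^m m^{d-1}, i.e. there exist positive constants c₁, c₂ (depending only on d) such that c₁ 2^m m^{d-1} ≤ ∑_{|k| ≤ m} ∏_{j=1}^d (2^{k_j+1}+1) ≤ c₂ 2^m m^{d-1} for all m ≥ 1. -/
open Real Finset

lemma smolyak_prod_ite (d : ℕ) [NeZero d] (a b : ℕ) :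
    (∏ j : Fin d, (if j = 0 then a else b)) = a * b ^ (d - 1) := by
  rw [← Finset.mul_prod_erase Finset.univ _ (Finset.mem_univ (0 : Fin d))]
  rw [if_pos rfl]
  congr 1
  rw [Finset.prod_congr rfl (fun j hj => if_neg (Finset.mem_erase.mp hj).1),
    Finset.prod_const, Finset.card_erase_of_mem (Finset.mem_univ _), Finset.card_univ,
    Fintype.card_fin]

lemma smolyak_term_lb (d : ℕ) (k : Fin d → ℕ) :
    (2 : ℝ) ^ (∑ j, k j) ≤ ∏ j, ((2 : ℝ) ^ (k j + 1) + 1) := by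
  rw [← Finset.prod_pow_eq_pow_sum]
  apply Finset.prod_le_prod
  · intro j _; positivity
  · intro j _
    have : (2:ℝ)^(k j) ≤ 2^(k j + 1) := by
      apply pow_le_pow_right₀ (by norm_num) (by omega)
    linarith

lemma smolyak_term_ub (d : ℕ) (k : Fin d → ℕ) :
    ∏ j, ((2 : ℝ) ^ (k j + 1) + 1) ≤ 4 ^ d * 2 ^ (∑ j, k j) := by
  have h : ∀ j, (2:ℝ)^(k j + 1) + 1 ≤ 4 * 2 ^ (k j) := by
    intro j
    have h1 : (1:ℝ) ≤ 2 ^ (k j) := one_le_pow₀ (by norm_num)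
    rw [pow_succ]
    nlinarith
  calc ∏ j, ((2:ℝ)^(k j + 1) + 1) ≤ ∏ j, (4 * 2^(k j)) :=
        Finset.prod_le_prod (fun j _ => by positivity) (fun j _ => h j)
    _ = 4^d * 2^(∑ j, k j) := by
        rw [Finset.prod_mul_distrib, Finset.prod_const, Finset.prod_pow_eq_pow_sum,
          Finset.card_univ, Fintype.card_fin]

lemma smolyak_fiber_card (d : ℕ) [NeZero d] (n s : ℕ) :
    ((Fintype.piFinset fun _ : Fin d => Finset.range (n+1)).filter
      (fun k => ∑ j, k j = s)).card ≤ (n+1) ^ (d - 1) := by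
  have hcard : (Fintype.piFinset fun j : Fin d =>
      if j = 0 then ({0} : Finset ℕ) else Finset.range (n+1)).card = (n+1) ^ (d-1) := by
    rw [Fintype.card_piFinset]
    have : ∀ j : Fin d, ((if j = 0 then ({0} : Finset ℕ) else Finset.range (n+1)).card)
        = if j = 0 then 1 else (n+1) := by
      intro j; split <;> simp
    rw [Finset.prod_congr rfl (fun j _ => this j), smolyak_prod_ite, one_mul]
  rw [← hcard]
  apply Finset.card_le_card_of_injOn (fun k (j : Fin d) => if j = 0 then 0 else k j)
  · intro k hk
    rw [Finset.mem_coe, Finset.mem_filter] at hk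
    rw [Finset.mem_coe, Fintype.mem_piFinset]
    intro j
    beta_reduce
    by_cases hj : j = 0
    · simp [hj]
    · rw [if_neg hj, if_neg hj]
      exact Fintype.mem_piFinset.mp hk.1 j
  · intro k hk k' hk' heq
    simp only [Finset.coe_filter, Set.mem_setOf_eq] at hk hk'
    have hne : ∀ j : Fin d, j ≠ 0 → k j = k' j := by
      intro j hj
      have := congrFun heq j
      simp only [if_neg hj] at this
      exact this
    have hsum : ∑ j ∈ Finset.univ.erase (0 : Fin d), k j
        = ∑ j ∈ Finset.univ.erase (0 : Fin d), k' j :=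
      Finset.sum_congr rfl (fun j hj => hne j (Finset.mem_erase.mp hj).1)
    have h1 := Finset.add_sum_erase Finset.univ k (Finset.mem_univ (0 : Fin d))
    have h2 := Finset.add_sum_erase Finset.univ k' (Finset.mem_univ (0 : Fin d))
    funext j
    by_cases hj : j = 0
    · subst hj; omega
    · exact hne j hj

/-- Cardinality of the Smolyak grid: `∑_{|k| ≤ m} ∏_j (2^{k_j+1}+1) ≍ 2^m m^{d-1}`. -/
theorem smolyak_grid_cardinality (d : ℕ) (hd : 1 ≤ d) :
    ∃ c₁ > (0 : ℝ), ∃ c₂ > (0 : ℝ), ∀ m : ℕ, 1 ≤ m →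
      c₁ * 2 ^ m * (m : ℝ) ^ (d - 1) ≤
        (∑ k ∈ (Fintype.piFinset fun _ : Fin d => Finset.range (m + 1)) |>.filter
            (fun k => ∑ j, k j ≤ m),
          ∏ j, ((2 : ℝ) ^ (k j + 1) + 1)) ∧
      (∑ k ∈ (Fintype.piFinset fun _ : Fin d => Finset.range (m + 1)) |>.filter
            (fun k => ∑ j, k j ≤ m),
          ∏ j, ((2 : ℝ) ^ (k j + 1) + 1)) ≤
        c₂ * 2 ^ m * (m : ℝ) ^ (d - 1) := by
  haveI : NeZero d := ⟨by omega⟩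
  have hd0 : (0:ℝ) < d := by exact_mod_cast hd
  refine ⟨(1 / (d:ℝ)) ^ (d - 1), by positivity, (4:ℝ)^d * 2^d, by positivity, ?_⟩
  intro m hm
  set F := (Fintype.piFinset fun _ : Fin d => Finset.range (m + 1)).filter
      (fun k => ∑ j, k j ≤ m) with hF
  constructor
  · -- Lower bound
    set t := m / d with ht
    set D := Fintype.piFinset fun j : Fin d =>
      if j = 0 then ({0} : Finset ℕ) else Finset.range (t+1) with hD
    set φ : (Fin d → ℕ) → (Fin d → ℕ) := fun k => Function.update k 0 (m - ∑ j, k j) with hφ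
    have hk0 : ∀ k ∈ D, k 0 = 0 := by
      intro k hk
      have := Fintype.mem_piFinset.mp hk 0
      simpa using this
    have hkle : ∀ k ∈ D, ∀ j : Fin d, j ≠ 0 → k j ≤ t := by
      intro k hk j hj
      have := Fintype.mem_piFinset.mp hk j
      rw [if_neg hj, Finset.mem_range] at this
      omega
    have hdt : d * t ≤ m := by
      rw [ht, mul_comm]
      exact Nat.div_mul_le_self m d
    have hsumle : ∀ k ∈ D, ∑ j, k j ≤ m := by
      intro k hk
      have h1 := Finset.add_sum_erase Finset.univ k (Finset.mem_univ (0 : Fin d))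
      have h2 : ∑ j ∈ Finset.univ.erase (0 : Fin d), k j ≤ (d - 1) * t := by
        calc ∑ j ∈ Finset.univ.erase (0 : Fin d), k j
            ≤ (Finset.univ.erase (0 : Fin d)).card • t :=
              Finset.sum_le_card_nsmul _ _ t
                (fun j hj => hkle k hk j (Finset.mem_erase.mp hj).1)
          _ = (d - 1) * t := by
              rw [smul_eq_mul, Finset.card_erase_of_mem (Finset.mem_univ _),
                Finset.card_univ, Fintype.card_fin]
      have := hk0 k hk
      have : (d-1) * t ≤ d * t := Nat.mul_le_mul_right t (by omega)
      omega
    have hφsum : ∀ k ∈ D, ∑ j, φ k j = m := by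
      intro k hk
      have h1 := Finset.add_sum_erase Finset.univ (φ k) (Finset.mem_univ (0 : Fin d))
      have h2 := Finset.add_sum_erase Finset.univ k (Finset.mem_univ (0 : Fin d))
      have h3 : ∑ j ∈ Finset.univ.erase (0 : Fin d), φ k j
          = ∑ j ∈ Finset.univ.erase (0 : Fin d), k j := by
        refine Finset.sum_congr rfl (fun j hj => ?_)
        simp only [hφ]
        rw [Function.update_of_ne (Finset.mem_erase.mp hj).1]
      have h4 : φ k 0 = m - ∑ j, k j := by
        simp only [hφ]
        rw [Function.update_self]
      have h5 := hsumle k hk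
      have h6 := hk0 k hk
      omega
    have hφmem : ∀ k ∈ D, φ k ∈ F := by
      intro k hk
      rw [hF, Finset.mem_filter]
      constructor
      · rw [Fintype.mem_piFinset]
        intro j
        rw [Finset.mem_range]
        by_cases hj : j = 0
        · subst hj
          simp only [hφ, Function.update_self]
          omega
        · simp only [hφ, Function.update_of_ne hj]
          have h1 := hkle k hk j hj
          have h2 : t ≤ m := Nat.div_le_self m d
          omega
      · rw [hφsum k hk]
    have hinj : ∀ x ∈ D, ∀ y ∈ D, φ x = φ y → x = y := by
      intro x hx y hy heq
      funext j
      by_cases hj : j = 0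
      · subst hj; rw [hk0 x hx, hk0 y hy]
      · have h := congrFun heq j
        simp only [hφ, Function.update_of_ne hj] at h
        exact h
    have hDcard : D.card = (t+1) ^ (d-1) := by
      rw [hD, Fintype.card_piFinset]
      have : ∀ j : Fin d, ((if j = 0 then ({0} : Finset ℕ) else Finset.range (t+1)).card)
          = if j = 0 then 1 else (t+1) := by
        intro j; split <;> simp
      rw [Finset.prod_congr rfl (fun j _ => this j), smolyak_prod_ite, one_mul]
    have step1 : ∑ k ∈ D.image φ, ∏ j, ((2 : ℝ) ^ (k j + 1) + 1)
        ≤ ∑ k ∈ F, ∏ j, ((2 : ℝ) ^ (k j + 1) + 1) := by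
      apply Finset.sum_le_sum_of_subset_of_nonneg
      · intro k hk
        obtain ⟨k', hk', rfl⟩ := Finset.mem_image.mp hk
        exact hφmem k' hk'
      · intro k _ _; positivity
    have step2 : ∑ k ∈ D.image φ, ∏ j, ((2 : ℝ) ^ (k j + 1) + 1)
        = ∑ k ∈ D, ∏ j, ((2 : ℝ) ^ (φ k j + 1) + 1) := Finset.sum_image hinj
    have step3 : (D.card : ℝ) * 2 ^ m ≤ ∑ k ∈ D, ∏ j, ((2 : ℝ) ^ (φ k j + 1) + 1) := by
      calc (D.card : ℝ) * 2^m = ∑ _k ∈ D, (2:ℝ)^m := by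
            rw [Finset.sum_const, nsmul_eq_mul]
        _ ≤ ∑ k ∈ D, ∏ j, ((2 : ℝ) ^ (φ k j + 1) + 1) := by
            apply Finset.sum_le_sum
            intro k hk
            have := smolyak_term_lb d (φ k)
            rwa [hφsum k hk] at this
    have hlt : m < (t + 1) * d := by
      have h1 := Nat.div_add_mod' m d
      have h2 := Nat.mod_lt m (show 0 < d by omega)
      rw [ht, Nat.add_mul, Nat.one_mul]
      omega
    have hdiv : (m : ℝ) / d ≤ ((t+1 : ℕ) : ℝ) := by
      rw [div_le_iff₀ hd0]
      exact_mod_cast hlt.le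
    calc (1 / (d:ℝ)) ^ (d - 1) * 2 ^ m * (m : ℝ) ^ (d - 1)
        = ((m:ℝ)/d) ^ (d-1) * 2^m := by ring
      _ ≤ ((t+1:ℕ):ℝ) ^ (d-1) * 2^m := by
          apply mul_le_mul_of_nonneg_right _ (by positivity)
          exact pow_le_pow_left₀ (by positivity) hdiv _
      _ = (D.card : ℝ) * 2^m := by rw [hDcard]; push_cast; ring
      _ ≤ ∑ k ∈ D, ∏ j, ((2 : ℝ) ^ (φ k j + 1) + 1) := step3
      _ = ∑ k ∈ D.image φ, ∏ j, ((2 : ℝ) ^ (k j + 1) + 1) := step2.symm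
      _ ≤ ∑ k ∈ F, ∏ j, ((2 : ℝ) ^ (k j + 1) + 1) := step1
  · -- Upper bound
    have step1 : ∑ k ∈ F, ∏ j, ((2 : ℝ) ^ (k j + 1) + 1)
        ≤ 4^d * ∑ k ∈ F, (2:ℝ) ^ (∑ j, k j) := by
      rw [Finset.mul_sum]
      exact Finset.sum_le_sum (fun k _ => smolyak_term_ub d k)
    have hmaps : ∀ k ∈ F, (∑ j, k j) ∈ Finset.range (m+1) := by
      intro k hk
      rw [Finset.mem_range]
      have := (Finset.mem_filter.mp hk).2
      omega
    have step2 : ∑ k ∈ F, (2:ℝ) ^ (∑ j, k j)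
        = ∑ s ∈ Finset.range (m+1), ∑ k ∈ F.filter (fun k => ∑ j, k j = s),
            (2:ℝ) ^ (∑ j, k j) :=
      (Finset.sum_fiberwise_of_maps_to hmaps _).symm
    have step3 : ∀ s ∈ Finset.range (m+1),
        ∑ k ∈ F.filter (fun k => ∑ j, k j = s), (2:ℝ) ^ (∑ j, k j)
          ≤ ((m+1:ℕ) : ℝ) ^ (d-1) * 2 ^ s := by
      intro s _
      have hc : (F.filter (fun k => ∑ j, k j = s)).card ≤ (m+1) ^ (d-1) := by
        refine le_trans (Finset.card_le_card ?_) (smolyak_fiber_card d m s)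
        intro k hk
        rw [Finset.mem_filter] at hk ⊢
        exact ⟨(Finset.mem_filter.mp hk.1).1, hk.2⟩
      calc ∑ k ∈ F.filter (fun k => ∑ j, k j = s), (2:ℝ) ^ (∑ j, k j)
          = ∑ k ∈ F.filter (fun k => ∑ j, k j = s), (2:ℝ) ^ s := by
            apply Finset.sum_congr rfl
            intro k hk
            rw [(Finset.mem_filter.mp hk).2]
        _ = ((F.filter (fun k => ∑ j, k j = s)).card : ℝ) * 2^s := by
            rw [Finset.sum_const, nsmul_eq_mul]
        _ ≤ ((m+1:ℕ):ℝ) ^ (d-1) * 2^s := by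
            apply mul_le_mul_of_nonneg_right _ (by positivity)
            exact_mod_cast hc
    have hgeom : ∑ s ∈ Finset.range (m+1), (2:ℝ)^s ≤ 2^(m+1) := by
      have := geom_sum_eq (show (2:ℝ) ≠ 1 by norm_num) (m+1)
      rw [this]
      have h2 : (0:ℝ) ≤ 2^(m+1) := by positivity
      norm_num
    have hm1 : ((m+1:ℕ):ℝ) ≤ 2 * m := by
      push_cast
      have : (1:ℝ) ≤ m := by exact_mod_cast hm
      linarith
    calc ∑ k ∈ F, ∏ j, ((2 : ℝ) ^ (k j + 1) + 1)
        ≤ 4^d * ∑ k ∈ F, (2:ℝ) ^ (∑ j, k j) := step1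
      _ = 4^d * ∑ s ∈ Finset.range (m+1), ∑ k ∈ F.filter (fun k => ∑ j, k j = s),
            (2:ℝ) ^ (∑ j, k j) := by rw [step2]
      _ ≤ 4^d * ∑ s ∈ Finset.range (m+1), ((m+1:ℕ):ℝ) ^ (d-1) * 2^s := by
          apply mul_le_mul_of_nonneg_left (Finset.sum_le_sum step3) (by positivity)
      _ = 4^d * (((m+1:ℕ):ℝ) ^ (d-1) * ∑ s ∈ Finset.range (m+1), (2:ℝ)^s) := by
          simp only [Finset.mul_sum]
      _ ≤ 4^d * (((2:ℝ) * m) ^ (d-1) * 2^(m+1)) := by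
          apply mul_le_mul_of_nonneg_left _ (by positivity)
          apply mul_le_mul (pow_le_pow_left₀ (by positivity) hm1 _) hgeom (by positivity)
            (by positivity)
      _ = (4:ℝ)^d * 2^d * 2 ^ m * (m : ℝ) ^ (d - 1) := by
          have h : (2:ℝ)^d = 2^(d-1) * 2 := by rw [← pow_succ]; congr 1; omega
          rw [mul_pow, pow_succ, h]; ring
end

section
/- For d ≥ 1 and a → ∞, the cardinality of the hyperbolic cross ℍ(a) := { k ∈ ℤ^d : ∏_{j=1}^d |k_j| ≤ a } (with the convention that the product is over coordinates, and k_j ≠ 0 for all j, or alternatively ∏ max(|k_j|,1) ≤ a) satisfies |ℍ(a)| ≍ a (log a)^{d-1}: there exist positive constants c₁, c₂ (depending only on d) such that c₁ a (log a)^{d-1} ≤ |ℍ(a)| ≤ c₂ a (log a)^{d-1} for all a ≥ 2. -/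
open Real Finset

/-- Sign code of an integer: 0 for negative, 1 for zero, 2 for positive. -/
def scode (z : ℤ) : Fin 3 := if z < 0 then 0 else if z = 0 then 1 else 2

lemma scode_inj {z w : ℤ} (h1 : max z.natAbs 1 = max w.natAbs 1)
    (h2 : scode z = scode w) : z = w := by
  unfold scode at h2
  split_ifs at h2 <;>
    first
      | (exfalso; exact absurd h2 (by decide))
      | omega

/-- The finset of positive integer tuples with product at most `a`. -/
noncomputable def Scross (e a : ℕ) : Finset (Fin (e+1) → ℕ) :=
  (Fintype.piFinset fun _ => Finset.Icc 1 a).filter (fun n => ∏ j, n j ≤ a)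

lemma Scross_card (e a : ℕ) :
    (Scross e a).card =
      ∑ t ∈ Fintype.piFinset (fun _ : Fin e => Finset.Icc 1 a), a / ∏ j, t j := by
  rw [Finset.card_eq_sum_card_fiberwise
    (f := fun n => Fin.tail n)
    (t := Fintype.piFinset (fun _ : Fin e => Finset.Icc 1 a)) ?_]
  · refine Finset.sum_congr rfl fun t ht => ?_
    have htm : ∀ j, 1 ≤ t j ∧ t j ≤ a := by
      intro j; have := Fintype.mem_piFinset.mp ht j
      simpa [Finset.mem_Icc] using this
    have hP : 0 < ∏ j, t j := Finset.prod_pos fun j _ => (htm j).1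
    have : (Scross e a).filter (fun n => Fin.tail n = t)
        = (Finset.Icc 1 (a / ∏ j, t j)).image (fun m => Fin.cons m t) := by
      ext n
      simp only [Finset.mem_filter, Finset.mem_image, Finset.mem_Icc, Scross,
        Fintype.mem_piFinset]
      constructor
      · rintro ⟨⟨hmem, hprod⟩, htail⟩
        refine ⟨n 0, ⟨?_, ?_⟩, ?_⟩
        · have := hmem 0; exact this.1
        · rw [Nat.le_div_iff_mul_le hP]
          calc n 0 * ∏ j, t j = ∏ j, n j := by
                rw [Fin.prod_univ_succ]
                congr 1
                rw [← htail]; rfl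
            _ ≤ a := hprod
        · rw [← htail]; exact Fin.cons_self_tail n
      · rintro ⟨m, ⟨hm1, hm2⟩, rfl⟩
        have hma : m ≤ a := le_trans hm2 (Nat.div_le_self _ _)
        refine ⟨⟨fun j => ?_, ?_⟩, ?_⟩
        · rcases Fin.eq_zero_or_eq_succ j with rfl | ⟨i, rfl⟩
          · simpa [Finset.mem_Icc] using ⟨hm1, hma⟩
          · simpa [Finset.mem_Icc] using htm i
        · rw [Fin.prod_univ_succ]
          simp only [Fin.cons_zero, Fin.cons_succ]
          exact (Nat.le_div_iff_mul_le hP).mp hm2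
        · funext i; simp [Fin.tail]
    rw [this, Finset.card_image_of_injective _ ?_, Nat.card_Icc]
    · simp
    · intro m m' h
      have := congrFun h 0
      simpa using this
  · intro n hn
    simp only [Finset.mem_coe, Scross, Finset.mem_filter, Fintype.mem_piFinset] at hn
    exact Fintype.mem_piFinset.mpr fun i => hn.1 i.succ

lemma Scross_card_lower (e a M : ℕ) (hM : M ≤ a) :
    ∑ t ∈ Fintype.piFinset (fun _ : Fin e => Finset.Icc 1 M), a / ∏ j, t j
      ≤ (Scross e a).card := by
  rw [Scross_card]
  exact Finset.sum_le_sum_of_subset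
    (Fintype.piFinset_subset _ _ fun i => Finset.Icc_subset_Icc_right hM)

lemma inv_prod_sum (e m : ℕ) :
    ∑ t ∈ Fintype.piFinset (fun _ : Fin e => Finset.Icc 1 m),
        (∏ j, (t j : ℝ))⁻¹ = ((harmonic m : ℝ)) ^ e := by
  have hh : (harmonic m : ℝ) = ∑ i ∈ Finset.Icc 1 m, (i:ℝ)⁻¹ := by
    rw [harmonic_eq_sum_Icc]; push_cast; ring
  have h2 := Finset.prod_univ_sum (fun _ : Fin e => Finset.Icc 1 m)
    (fun _ (i : ℕ) => (i:ℝ)⁻¹)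
  rw [hh, ← Fin.prod_const e (∑ i ∈ Finset.Icc 1 m, (i:ℝ)⁻¹), h2]
  refine Finset.sum_congr rfl fun t _ => ?_
  rw [← Finset.prod_inv_distrib]

/-- The hyperbolic cross as a subtype. -/
abbrev HC (e a : ℕ) := {k : Fin (e+1) → ℤ // ∏ j, max (k j).natAbs 1 ≤ a}

noncomputable def Tcross (e a : ℕ) : Finset ((Fin (e+1) → ℕ) × (Fin (e+1) → Fin 3)) :=
  Scross e a ×ˢ Finset.univ

noncomputable def Phi (e a : ℕ) (k : HC e a) : Tcross e a := by
  refine ⟨⟨fun j => max (k.1 j).natAbs 1, fun j => scode (k.1 j)⟩, ?_⟩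
  have hfac : ∀ j, 1 ≤ max (k.1 j).natAbs 1 := fun j => le_max_right _ _
  have hle : ∀ j, max (k.1 j).natAbs 1 ≤ a := by
    intro j
    refine le_trans ?_ k.2
    exact Finset.single_le_prod' (fun i _ => hfac i) (Finset.mem_univ j)
  simp only [Tcross, Finset.mem_product, Finset.mem_univ, and_true, Scross,
    Finset.mem_filter, Fintype.mem_piFinset, Finset.mem_Icc]
  exact ⟨fun j => ⟨hfac j, hle j⟩, k.2⟩

lemma Phi_inj (e a : ℕ) : Function.Injective (Phi e a) := by
  intro k k' h
  have h1 := congrArg (fun p => p.1.1) h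
  have h2 := congrArg (fun p => p.1.2) h
  ext j
  exact scode_inj (congrFun h1 j) (congrFun h2 j)

instance (e a : ℕ) : Finite (HC e a) := Finite.of_injective _ (Phi_inj e a)

lemma card_upper (e a : ℕ) : (Nat.card (HC e a)) ≤ (Scross e a).card * 3 ^ (e+1) := by
  have := Nat.card_le_card_of_injective _ (Phi_inj e a)
  rw [Nat.card_eq_finsetCard] at this
  refine le_trans this ?_
  rw [Tcross, Finset.card_product]
  simp

noncomputable def Psi (e a : ℕ) (n : {n // n ∈ Scross e a}) : HC e a := by
  refine ⟨fun j => ((n.1 j : ℕ) : ℤ), ?_⟩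
  have hm := n.2
  simp only [Scross, Finset.mem_filter, Fintype.mem_piFinset, Finset.mem_Icc] at hm
  have : ∀ j, max ((n.1 j : ℤ)).natAbs 1 = n.1 j := by
    intro j
    have := (hm.1 j).1
    simp only [Int.natAbs_natCast]
    omega
  calc ∏ j, max ((n.1 j : ℤ)).natAbs 1 = ∏ j, n.1 j := by
        exact Finset.prod_congr rfl fun j _ => this j
    _ ≤ a := hm.2

lemma Psi_inj (e a : ℕ) : Function.Injective (Psi e a) := by
  intro n n' h
  have := congrArg Subtype.val h
  ext j
  have h2 := congrFun this j
  simp only [Psi] at h2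
  exact_mod_cast h2

lemma card_lower (e a : ℕ) : (Scross e a).card ≤ Nat.card (HC e a) := by
  have := Nat.card_le_card_of_injective _ (Psi_inj e a)
  rwa [Nat.card_eq_finsetCard] at this

lemma nat_div_ge (P a : ℕ) (hP : 1 ≤ P) (hPa : P ≤ a) : a ≤ 2 * P * (a / P) := by
  have hq : 1 ≤ a / P := (Nat.one_le_div_iff hP).mpr hPa
  have h1 := Nat.div_add_mod a P
  have h2 : a % P < P := Nat.mod_lt _ hP
  have h3 : P * 1 ≤ P * (a / P) := Nat.mul_le_mul_left P hq
  have h4 : a % P ≤ P * (a / P) := le_trans (Nat.le_of_lt h2) (by simpa using h3)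
  calc a = P * (a / P) + a % P := (Nat.div_add_mod a P).symm
    _ ≤ P * (a / P) + P * (a / P) := Nat.add_le_add_left h4 _
    _ = 2 * P * (a / P) := by ring

lemma Scross_upper_real (e a : ℕ) :
    ((Scross e a).card : ℝ) ≤ a * ((harmonic a : ℝ)) ^ e := by
  rw [Scross_card, ← inv_prod_sum e a, Finset.mul_sum, Nat.cast_sum]
  refine Finset.sum_le_sum fun t ht => ?_
  have hpos : ∀ j, 1 ≤ t j := by
    intro j; have := Fintype.mem_piFinset.mp ht j
    simp [Finset.mem_Icc] at this; exact this.1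
  have hP : (0:ℝ) < ∏ j, (t j : ℝ) := by
    refine Finset.prod_pos fun j _ => ?_
    exact_mod_cast hpos j
  calc ((a / ∏ j, t j : ℕ) : ℝ) ≤ (a : ℝ) / ((∏ j, t j : ℕ) : ℝ) := Nat.cast_div_le
    _ = a * (∏ j, (t j : ℝ))⁻¹ := by push_cast; ring

lemma Scross_lower_real (e a M : ℕ) (hM1 : 1 ≤ M) (hMa : M ≤ a) (hMe : M ^ e ≤ a) :
    (a:ℝ)/2 * ((harmonic M : ℝ)) ^ e ≤ ((Scross e a).card : ℝ) := by
  have key : ∀ t ∈ Fintype.piFinset (fun _ : Fin e => Finset.Icc 1 M),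
      (a:ℝ)/2 * (∏ j, (t j : ℝ))⁻¹ ≤ ((a / ∏ j, t j : ℕ) : ℝ) := by
    intro t ht
    have hpos : ∀ j, 1 ≤ t j ∧ t j ≤ M := by
      intro j; have := Fintype.mem_piFinset.mp ht j
      simpa [Finset.mem_Icc] using this
    set P := ∏ j, t j with hPdef
    have hP1 : 1 ≤ P := Finset.one_le_prod' fun j _ => (hpos j).1
    have hPM : P ≤ M ^ e := by
      calc P ≤ ∏ _j : Fin e, M := Finset.prod_le_prod' fun j _ => (hpos j).2
        _ = M ^ e := by rw [Finset.prod_const, Finset.card_univ, Fintype.card_fin]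
    have hPa : P ≤ a := le_trans hPM hMe
    have h := nat_div_ge P a hP1 hPa
    have hcast : (a:ℝ) ≤ 2 * P * ((a / P : ℕ):ℝ) := by exact_mod_cast h
    have hPr : (0:ℝ) < (P:ℝ) := by exact_mod_cast hP1
    have hprodcast : ((P:ℕ):ℝ) = ∏ j, (t j : ℝ) := by
      rw [hPdef]; push_cast; ring
    rw [← hprodcast]
    have heq : (a:ℝ)/2 * ((P:ℝ))⁻¹ = (a:ℝ)/(2*P) := by
      field_simp
    rw [heq, div_le_iff₀ (by positivity)]
    nlinarith [hcast]
  calc (a:ℝ)/2 * ((harmonic M : ℝ)) ^ e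
      = ∑ t ∈ Fintype.piFinset (fun _ : Fin e => Finset.Icc 1 M),
          (a:ℝ)/2 * (∏ j, (t j : ℝ))⁻¹ := by rw [← Finset.mul_sum, inv_prod_sum]
    _ ≤ ∑ t ∈ Fintype.piFinset (fun _ : Fin e => Finset.Icc 1 M),
          ((a / ∏ j, t j : ℕ) : ℝ) := Finset.sum_le_sum key
    _ = ((∑ t ∈ Fintype.piFinset (fun _ : Fin e => Finset.Icc 1 M),
          (a / ∏ j, t j) : ℕ) : ℝ) := by push_cast; rfl
    _ ≤ ((Scross e a).card : ℝ) := by exact_mod_cast Scross_card_lower e a M hMa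

/-- Cardinality of the hyperbolic cross
`ℍ(a) = { k ∈ ℤ^d : ∏_j max(|k_j|,1) ≤ a }` is of order `a (log a)^{d-1}`. -/
theorem hyperbolic_cross_cardinality (d : ℕ) (hd : 1 ≤ d) :
    ∃ c₁ > (0 : ℝ), ∃ c₂ > (0 : ℝ), ∀ a : ℕ, 2 ≤ a →
      c₁ * a * (Real.log a) ^ (d - 1) ≤
        (Nat.card {k : Fin d → ℤ // ∏ j, max (k j).natAbs 1 ≤ a} : ℝ) ∧
      (Nat.card {k : Fin d → ℤ // ∏ j, max (k j).natAbs 1 ≤ a} : ℝ) ≤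
        c₂ * a * (Real.log a) ^ (d - 1) := by
  obtain ⟨e, rfl⟩ : ∃ e, d = e + 1 := ⟨d - 1, (Nat.succ_pred_eq_of_pos hd).symm⟩
  simp only [Nat.add_sub_cancel]
  refine ⟨(1/2) * ((max e 1 : ℝ))⁻¹ ^ e, by positivity,
    3^(e+1) * (1 + 1/Real.log 2) ^ e, ?_, ?_⟩
  · have h2 : (0:ℝ) < Real.log 2 := Real.log_pos (by norm_num)
    positivity
  intro a ha
  have ha1 : (1:ℝ) ≤ (a:ℝ) := by exact_mod_cast le_trans (by norm_num) ha
  have ha0 : (0:ℝ) < (a:ℝ) := by linarith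
  have hlog2 : (0:ℝ) < Real.log 2 := Real.log_pos (by norm_num)
  have hloga2 : Real.log 2 ≤ Real.log a := by
    apply Real.log_le_log (by norm_num)
    exact_mod_cast ha
  have hloga : (0:ℝ) < Real.log a := lt_of_lt_of_le hlog2 hloga2
  constructor
  · -- lower bound
    obtain ⟨M, hM1, hMa, hMe, hHarm⟩ :
        ∃ M : ℕ, 1 ≤ M ∧ M ≤ a ∧ M ^ e ≤ a ∧
          (Real.log a / (max (e:ℝ) 1)) ^ e ≤ ((harmonic M : ℝ)) ^ e := by
      rcases Nat.eq_zero_or_pos e with rfl | he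
      · exact ⟨1, le_refl _, by omega, by simpa using (by omega : 1 ≤ a), by simp⟩
      · set r : ℝ := (a:ℝ) ^ ((e:ℝ)⁻¹) with hr
        have hepos : (0:ℝ) < (e:ℝ) := by exact_mod_cast he
        have hr1 : (1:ℝ) ≤ r := Real.one_le_rpow ha1 (by positivity)
        have hr0 : (0:ℝ) ≤ r := by linarith
        set M : ℕ := ⌊r⌋₊ with hM
        have hM1 : 1 ≤ M := Nat.le_floor (by exact_mod_cast hr1)
        have hMr : (M:ℝ) ≤ r := Nat.floor_le hr0
        have hre : r ^ e = (a:ℝ) := by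
          rw [hr, ← Real.rpow_natCast ((a:ℝ) ^ ((e:ℝ)⁻¹)) e, ← Real.rpow_mul (le_of_lt ha0),
            inv_mul_cancel₀ (ne_of_gt hepos), Real.rpow_one]
        have hMe : M ^ e ≤ a := by
          have : ((M:ℝ)) ^ e ≤ (a:ℝ) := by
            calc ((M:ℝ)) ^ e ≤ r ^ e := pow_le_pow_left₀ (by positivity) hMr e
              _ = (a:ℝ) := hre
          exact_mod_cast this
        have hMa : M ≤ a := le_trans (Nat.le_self_pow (by omega) M) hMe
        refine ⟨M, hM1, hMa, hMe, ?_⟩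
        apply pow_le_pow_left₀ (by positivity)
        have hmax : (max (e:ℝ) 1) = (e:ℝ) := max_eq_left (by exact_mod_cast he)
        calc Real.log a / (max (e:ℝ) 1) = (e:ℝ)⁻¹ * Real.log a := by
              rw [hmax]; ring
          _ = Real.log r := by rw [hr, Real.log_rpow ha0]
          _ ≤ Real.log (M + 1) := by
              apply Real.log_le_log (by positivity)
              have := Nat.lt_floor_add_one r
              linarith
          _ ≤ (harmonic M : ℝ) := by
              have := log_add_one_le_harmonic M
              push_cast at this ⊢
              linarith
    have hS := Scross_lower_real e a M hM1 hMa hMe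
    have hN := card_lower e a
    have hNr : ((Scross e a).card : ℝ) ≤ (Nat.card (HC e a) : ℝ) := by exact_mod_cast hN
    calc (1/2) * ((max (e:ℝ) 1))⁻¹ ^ e * a * (Real.log a) ^ e
        = (a:ℝ)/2 * (Real.log a / (max (e:ℝ) 1)) ^ e := by
          rw [div_pow, inv_pow]
          field_simp
      _ ≤ (a:ℝ)/2 * ((harmonic M : ℝ)) ^ e := by
          apply mul_le_mul_of_nonneg_left hHarm (by positivity)
      _ ≤ ((Scross e a).card : ℝ) := hS
      _ ≤ _ := hNr
  · -- upper bound
    have hN := card_upper e a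
    have hNr : (Nat.card (HC e a) : ℝ) ≤ ((Scross e a).card : ℝ) * 3 ^ (e+1) := by
      exact_mod_cast hN
    have hS := Scross_upper_real e a
    have hharm : (harmonic a : ℝ) ≤ 1 + Real.log a := harmonic_le_one_add_log a
    have hharm0 : (0:ℝ) ≤ (harmonic a : ℝ) := by
      exact_mod_cast (harmonic_pos (by omega : a ≠ 0)).le
    have hkey : (harmonic a : ℝ) ≤ (1 + 1/Real.log 2) * Real.log a := by
      have h1 : (1:ℝ) ≤ Real.log a / Real.log 2 := (one_le_div hlog2).mpr hloga2
      have h2 : (1 + 1/Real.log 2) * Real.log a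
          = Real.log a + Real.log a / Real.log 2 := by
        field_simp
      linarith
    calc (Nat.card (HC e a) : ℝ)
        ≤ ((Scross e a).card : ℝ) * 3 ^ (e+1) := hNr
      _ ≤ (a * ((harmonic a : ℝ)) ^ e) * 3 ^ (e+1) := by
          apply mul_le_mul_of_nonneg_right hS (by positivity)
      _ ≤ (a * ((1 + 1/Real.log 2) * Real.log a) ^ e) * 3 ^ (e+1) := by
          apply mul_le_mul_of_nonneg_right _ (by positivity)
          apply mul_le_mul_of_nonneg_left _ (by positivity)
          exact pow_le_pow_left₀ hharm0 hkey e
      _ = 3^(e+1) * (1 + 1/Real.log 2) ^ e * a * (Real.log a) ^ e := by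
          rw [mul_pow]; ring
end
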